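/- Let n be a positive even integer. Every GL_n(ℝ)-equivariant map f : (ℙ(ℝⁿ))^{n+1} → ℝ_ε vanishes on every (n+1)-tuple (x_0,…,x_n) of points of ℙ(ℝⁿ) that is not hereditarily spanning. -/

import Mathlib

open Matrix

noncomputable section

/-- Sign of the determinant of `g` (the character ε of `GL_n(ℝ)`). -/
def eps {n : ℕ} (g : GL (Fin n) ℝ) : ℝ :=
  Real.sign ((g : Matrix (Fin n) (Fin n) ℝ).det)

/-- Action of `GL n ℝ` on the projective space of `ℝⁿ`. -/
def glAct {n : ℕ} (g : GL (Fin n) ℝ) (x : Projectivization ℝ (Fin n → ℝ)) :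
    Projectivization ℝ (Fin n → ℝ) :=
  Projectivization.map (Matrix.mulVecLin (g : Matrix (Fin n) (Fin n) ℝ))
    (fun a b hab => by
      have hab' : (↑g : Matrix (Fin n) (Fin n) ℝ) *ᵥ a = (↑g : Matrix (Fin n) (Fin n) ℝ) *ᵥ b := hab
      have key : ((↑g⁻¹ : Matrix (Fin n) (Fin n) ℝ) * (↑g : Matrix (Fin n) (Fin n) ℝ)) = 1 :=
        Units.inv_mul g
      calc a = 1 *ᵥ a := (Matrix.one_mulVec a).symm
        _ = (↑g⁻¹ : Matrix (Fin n) (Fin n) ℝ) *ᵥ ((↑g : Matrix (Fin n) (Fin n) ℝ) *ᵥ a) := by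
              rw [Matrix.mulVec_mulVec, key]
        _ = (↑g⁻¹ : Matrix (Fin n) (Fin n) ℝ) *ᵥ ((↑g : Matrix (Fin n) (Fin n) ℝ) *ᵥ b) := by
              rw [hab']
        _ = 1 *ᵥ b := by rw [Matrix.mulVec_mulVec, key]
        _ = b := Matrix.one_mulVec b) x

/-- `GL_n(ℝ)`-equivariance with values in the sign module `ℝ_ε`:
`f(g·x_1,…,g·x_q) = ε(g)·f(x_1,…,x_q)`. -/
def PEquivariant {n q : ℕ} (f : (Fin q → Projectivization ℝ (Fin n → ℝ)) → ℝ) : Prop :=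
  ∀ (g : GL (Fin n) ℝ) (x : Fin q → Projectivization ℝ (Fin n → ℝ)),
    f (fun i => glAct g (x i)) = eps g * f x

/-- A `k`-tuple of projective points is hereditarily spanning if every `n` of the
corresponding lines together span `ℝⁿ`. -/
def HerSpanP {n k : ℕ} (x : Fin k → Projectivization ℝ (Fin n → ℝ)) : Prop :=
  ∀ s : Finset (Fin k), s.card = n → (⨆ i ∈ s, (x i).submodule) = ⊤

/-- every `GL_n(ℝ)`-equivariant map `(ℙ(ℝⁿ))^{n+1} → ℝ_ε` vanishes on every
`(n+1)`-tuple that is not hereditarily spanning. -/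
theorem stmt2 (n : ℕ) (hn : 0 < n) (he : Even n)
    (f : (Fin (n + 1) → Projectivization ℝ (Fin n → ℝ)) → ℝ) (hf : PEquivariant f)
    (x : Fin (n + 1) → Projectivization ℝ (Fin n → ℝ)) (hx : ¬ HerSpanP x) :
    f x = 0 := by
  simp only [HerSpanP] at hx
  push_neg at hx
  obtain ⟨s, hs, hU⟩ := hx
  set U : Submodule ℝ (Fin n → ℝ) := ⨆ i ∈ s, (x i).submodule with hUdef
  have hrepU : ∀ i ∈ s, (x i).rep ∈ U := by
    intro i hi
    have h1 : (x i).submodule ≤ U :=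
      le_iSup₂ (f := fun i (_ : i ∈ s) => (x i).submodule) i hi
    exact h1 (by rw [Projectivization.submodule_eq]; exact Submodule.mem_span_singleton_self _)
  obtain ⟨j, hj⟩ := Finset.card_eq_one.mp
    (by simp [Finset.card_compl, hs] : sᶜ.card = 1)
  have key : ∃ (ψ : Module.Dual ℝ (Fin n → ℝ)) (v : Fin n → ℝ),
      ψ v = 1 ∧ (∀ u ∈ U, ψ u = 0) ∧ (ψ (x j).rep = 0 ∨ (x j).rep = v) := by
    have main : ∀ w : Fin n → ℝ, w ∉ U → ∃ ψ : Module.Dual ℝ (Fin n → ℝ),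
        ψ w = 1 ∧ (∀ u ∈ U, ψ u = 0) := by
      intro w hw
      obtain ⟨ψ, hψw, hψU⟩ := U.exists_dual_map_eq_bot_of_notMem hw inferInstance
      have hz : ∀ u ∈ U, ψ u = 0 := by
        intro u hu
        have : ψ u ∈ U.map ψ := Submodule.mem_map_of_mem hu
        rw [hψU] at this
        simpa using this
      refine ⟨(ψ w)⁻¹ • ψ, ?_, ?_⟩
      · simp [inv_mul_cancel₀ hψw]
      · intro u hu; simp [hz u hu]
    by_cases hju : (x j).rep ∈ U
    · obtain ⟨w, hw⟩ : ∃ w, w ∉ U := by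
        by_contra h
        push_neg at h
        exact hU (Submodule.eq_top_iff'.mpr h)
      obtain ⟨ψ, h1, h2⟩ := main w hw
      exact ⟨ψ, w, h1, h2, Or.inl (h2 _ hju)⟩
    · obtain ⟨ψ, h1, h2⟩ := main _ hju
      exact ⟨ψ, (x j).rep, h1, h2, Or.inr rfl⟩
  obtain ⟨ψ, v, hψv, hψU, hjcase⟩ := key
  set c : Fin n → ℝ := fun i => ψ (fun k => if i = k then 1 else 0) with hc
  have hdot : ∀ w, c ⬝ᵥ w = ψ w := by
    intro w
    rw [LinearMap.pi_apply_eq_sum_univ ψ w, dotProduct]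
    exact Finset.sum_congr rfl fun i _ => by simp [hc, mul_comm]
  set A : Matrix (Fin n) (Fin n) ℝ := Matrix.vecMulVec v c with hAdef
  have hvmv : ∀ w, A *ᵥ w = (c ⬝ᵥ w) • v := by
    intro w
    funext i
    simp only [hAdef, Matrix.mulVec, dotProduct, Matrix.vecMulVec_apply,
      Pi.smul_apply, smul_eq_mul]
    rw [Finset.sum_mul]
    exact Finset.sum_congr rfl fun k _ => by ring
  set M : Matrix (Fin n) (Fin n) ℝ := 1 - (2 : ℝ) • A with hM
  have hMw : ∀ w, M *ᵥ w = w - (2 * ψ w) • v := by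
    intro w
    rw [hM, Matrix.sub_mulVec, Matrix.one_mulVec, Matrix.smul_mulVec, hvmv, hdot,
      smul_smul]
  have hA2 : A * A = A := by
    have h1 : c ⬝ᵥ v = 1 := by rw [hdot, hψv]
    funext i k
    simp only [hAdef, Matrix.mul_apply, Matrix.vecMulVec_apply]
    calc ∑ l, v i * c l * (v l * c k) = (v i * c k) * (c ⬝ᵥ v) := by
          rw [dotProduct, Finset.mul_sum]
          exact Finset.sum_congr rfl fun l _ => by ring
      _ = v i * c k := by rw [h1, mul_one]
  have hMM : M * M = 1 := by
    rw [hM]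
    simp only [sub_mul, mul_sub, Matrix.one_mul, Matrix.mul_one, Matrix.smul_mul,
      Matrix.mul_smul, hA2, smul_smul]
    norm_num
    module
  have hdet : M.det = -1 := by
    have hMeq : M = 1 + Matrix.replicateCol (Fin 1) ((-2 : ℝ) • v) * Matrix.replicateRow (Fin 1) c := by
      erw [← Matrix.vecMulVec_eq (ι := Fin 1)]; rw [hM, hAdef]
      funext i k
      simp only [Matrix.sub_apply, Matrix.add_apply, Matrix.smul_apply, Matrix.vecMulVec_apply,
        Pi.smul_apply, smul_eq_mul]
      ring
    rw [hMeq]; erw [Matrix.det_one_add_replicateCol_mul_replicateRow (ι := Fin 1)]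
    have : c ⬝ᵥ ((-2 : ℝ) • v) = -2 := by
      rw [dotProduct_smul, hdot, hψv]
      norm_num
    rw [this]
    norm_num
  set g : GL (Fin n) ℝ := ⟨M, M, hMM, hMM⟩ with hg
  have hgcoe : (↑g : Matrix (Fin n) (Fin n) ℝ) = M := rfl
  have heps : eps g = -1 := by
    rw [eps, hgcoe, hdet]
    exact Real.sign_of_neg (by norm_num)
  have hfix : ∀ i, glAct g (x i) = x i := by
    intro i
    have hrep : M *ᵥ (x i).rep = (x i).rep ∨ M *ᵥ (x i).rep = -(x i).rep := by
      by_cases hi : i ∈ s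
      · left
        rw [hMw, hψU _ (hrepU i hi)]
        simp
      · have hij : i = j := by
          have : i ∈ sᶜ := Finset.mem_compl.mpr hi
          rwa [hj, Finset.mem_singleton] at this
        subst hij
        rcases hjcase with h | h
        · left
          rw [hMw, h]
          simp
        · right
          rw [hMw, h, hψv]
          norm_num
          module
    conv_lhs => rw [← (x i).mk_rep]
    rw [glAct]; erw [Projectivization.map_mk]
    conv_rhs => rw [← (x i).mk_rep]
    apply (Projectivization.mk_eq_mk_iff ℝ _ _ _ _).mpr
    rcases hrep with h | h
    · exact ⟨1, by simp [hgcoe, Matrix.mulVecLin_apply, h]⟩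
    · exact ⟨-1, by simp [hgcoe, Matrix.mulVecLin_apply, h, Units.smul_def]⟩
  have heq := hf g x
  rw [funext hfix, heps] at heq
  linarith


end
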